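/- If N(φ·, φ·, ·) ≡ 0 (i.e., N(φx, φy, z) = 0 for all x,y,z), then the φ-canonical potential Q'(x,y,z) = Q⁰(x,y,z) - (1/8){N(φ²z,φ²y,φ²x) + 2N(φz,φy,ξ)η(x)} equals Q⁰(x,y,z); conversely, if Q' = Q⁰ then N(φx, φy, z) = 0 for all x,y,z. -/
import Mathlib


theorem stmt16 (V : Type*) [AddCommGroup V] [Module ℝ V]
    (φ : V →ₗ[ℝ] V) (ξ : V) (η : V →ₗ[ℝ] ℝ)
    (hφξ : φ ξ = 0) (hφ2 : ∀ x : V, φ (φ x) = -x + η x • ξ)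
    (hηφ : ∀ x : V, η (φ x) = 0) (hηξ : η ξ = 1)
    (g : V →ₗ[ℝ] V →ₗ[ℝ] ℝ) (hsym : ∀ x y : V, g x y = g y x)
    (hB : ∀ x y : V, g (φ x) (φ y) = - g x y + η x * η y)
    (F : V →ₗ[ℝ] V →ₗ[ℝ] V →ₗ[ℝ] ℝ)
    (hF1 : ∀ x y z : V, F x y z = F x z y)
    (hF2 : ∀ x y z : V, F x y z = F x (φ y) (φ z) + η y * F x ξ z + η z * F x y ξ)
    (Q0 : V → V → V → ℝ)
    (hQ0 : ∀ x y z : V, Q0 x y z =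
      (1 / 2) * (F x (φ y) z + η z * F x (φ y) ξ - 2 * η y * F x (φ z) ξ))
    (N : V → V → V → ℝ)
    (hN : ∀ x y z : V, N x y z = F (φ x) y z - F x y (φ z) + F x (φ y) ξ * η z
          - F (φ y) x z + F y x (φ z) - F y (φ x) ξ * η z)
    (Q' : V → V → V → ℝ)
    (hQ' : ∀ x y z : V, Q' x y z = Q0 x y z
      - (1 / 8) * (N (φ (φ z)) (φ (φ y)) (φ (φ x)) + 2 * N (φ z) (φ y) ξ * η x)) :
    (∀ x y z : V, N (φ x) (φ y) z = 0) ↔ (∀ x y z : V, Q' x y z = Q0 x y z) := by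
  constructor
  · intro h x y z
    rw [hQ', h (φ z) (φ y) (φ (φ x)), h z y ξ]
    ring
  · intro h
    -- basic linearity facts about N
    have Nzero : ∀ a b : V, N a b 0 = 0 := by
      intro a b; simp [hN]
    have Nsub3 : ∀ a b u v : V, N a b (u - v) = N a b u - N a b v := by
      intro a b u v; simp only [hN, map_sub]; ring
    have Nsmul3 : ∀ (a b : V) (t : ℝ) (v : V), N a b (t • v) = t * N a b v := by
      intro a b t v; simp only [hN, map_smul, smul_eq_mul]; ring
    have Nneg12 : ∀ a b c : V, N (-a) (-b) c = N a b c := by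
      intro a b c; simp only [hN, map_neg, LinearMap.neg_apply]; ring
    -- the hypothesis from Q' = Q0
    have hH : ∀ x y z : V,
        N (φ (φ z)) (φ (φ y)) (φ (φ x)) + 2 * N (φ z) (φ y) ξ * η x = 0 := by
      intro x y z
      have := hQ' x y z
      rw [h x y z] at this
      linarith
    -- Step A : N (φ z) (φ y) ξ = 0
    have hA : ∀ y z : V, N (φ z) (φ y) ξ = 0 := by
      intro y z
      have := hH ξ y z
      rw [hφξ, map_zero, Nzero, hηξ] at this
      linarith
    intro x y z
    have key := hH (-z) (-(φ y)) (-(φ x))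
    have e1 : φ (φ (-(φ x))) = φ x := by
      rw [map_neg, map_neg, hφ2, hηφ]
      simp
    have e2 : φ (φ (-(φ y))) = φ y := by
      rw [map_neg, map_neg, hφ2, hηφ]
      simp
    have e3 : φ (φ (-z)) = z - η z • ξ := by
      rw [map_neg, map_neg, hφ2, neg_add, neg_neg, ← sub_eq_add_neg]
    rw [e1, e2, e3] at key
    have e4 : N (φ (-(φ x))) (φ (-(φ y))) ξ = 0 := by
      rw [map_neg, map_neg, Nneg12, hA (φ y) (φ x)]
    rw [e4, Nsub3, Nsmul3, hA y x, map_neg] at key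
    simpa using key
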